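/- Let V be a real Hilbert space, A : V → V SPD and invertible, and u, u_h ∈ V with residual r = A(u - u_h). Suppose B : V → V satisfies the contraction property ‖I - BA‖_A ≤ δ < 1 in the A-operator norm. Then (1/(1+δ))‖Br‖_A ≤ ‖u - u_h‖_A ≤ (1/(1-δ))‖Br‖_A. -/
import Mathlib


open scoped RealInnerProductSpace

noncomputable def anorm {V : Type*} [NormedAddCommGroup V] [InnerProductSpace ℝ V]
    (A : V →L[ℝ] V) (x : V) : ℝ := Real.sqrt ⟪A x, x⟫

section aux
variable {V : Type*} [NormedAddCommGroup V] [InnerProductSpace ℝ V] (A : V →L[ℝ] V)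

lemma Qnonneg (hpos : ∀ v : V, v ≠ 0 → 0 < ⟪A v, v⟫) (x : V) : 0 ≤ ⟪A x, x⟫ := by
  by_cases h : x = 0
  · simp [h]
  · exact (hpos x h).le

lemma anorm_nonneg (x : V) : 0 ≤ anorm A x := Real.sqrt_nonneg _

lemma anorm_sq (hpos : ∀ v : V, v ≠ 0 → 0 < ⟪A v, v⟫) (x : V) :
    anorm A x ^ 2 = ⟪A x, x⟫ := by
  rw [anorm, Real.sq_sqrt (Qnonneg A hpos x)]

lemma fsymm (hsym : ∀ v w : V, ⟪A v, w⟫ = ⟪v, A w⟫) (x y : V) :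
    ⟪A x, y⟫ = ⟪A y, x⟫ := by
  rw [hsym x y, real_inner_comm]

lemma cauchy (hsym : ∀ v w : V, ⟪A v, w⟫ = ⟪v, A w⟫)
    (hpos : ∀ v : V, v ≠ 0 → 0 < ⟪A v, v⟫) (x y : V) :
    ⟪A x, y⟫ ^ 2 ≤ ⟪A x, x⟫ * ⟪A y, y⟫ := by
  have h : ∀ t : ℝ, 0 ≤ ⟪A y, y⟫ * (t * t) + (2 * ⟪A x, y⟫) * t + ⟪A x, x⟫ := by
    intro t
    have hQ := Qnonneg A hpos (x + t • y)
    have hexp : ⟪A (x + t • y), x + t • y⟫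
        = ⟪A y, y⟫ * (t * t) + (2 * ⟪A x, y⟫) * t + ⟪A x, x⟫ := by
      simp only [map_add, map_smul, inner_add_left, inner_add_right,
        real_inner_smul_left, real_inner_smul_right, ContinuousLinearMap.coe_smul',
        Pi.smul_apply, smul_eq_mul]
      linear_combination (-t) * (fsymm A hsym x y)
    linarith [hexp ▸ hQ]
  have hd := discrim_le_zero h
  rw [discrim] at hd
  nlinarith

lemma anorm_triangle (hsym : ∀ v w : V, ⟪A v, w⟫ = ⟪v, A w⟫)
    (hpos : ∀ v : V, v ≠ 0 → 0 < ⟪A v, v⟫) (x y : V) :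
    anorm A (x + y) ≤ anorm A x + anorm A y := by
  have h1 : anorm A (x + y) ^ 2 ≤ (anorm A x + anorm A y) ^ 2 := by
    rw [anorm_sq A hpos]
    have hcs : ⟪A x, y⟫ ≤ anorm A x * anorm A y := by
      nlinarith [cauchy A hsym hpos x y, anorm_sq A hpos x, anorm_sq A hpos y,
        anorm_nonneg A x, anorm_nonneg A y, Qnonneg A hpos x, Qnonneg A hpos y,
        mul_nonneg (anorm_nonneg A x) (anorm_nonneg A y)]
    have hexp : ⟪A (x + y), x + y⟫ = ⟪A x, x⟫ + 2 * ⟪A x, y⟫ + ⟪A y, y⟫ := by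
      simp only [map_add, inner_add_left, inner_add_right]
      nlinarith [fsymm A hsym x y]
    rw [hexp]
    nlinarith [anorm_sq A hpos x, anorm_sq A hpos y]
  nlinarith [anorm_nonneg A (x + y), anorm_nonneg A x, anorm_nonneg A y]

end aux

theorem stmt14 {V : Type*} [NormedAddCommGroup V] [InnerProductSpace ℝ V] [CompleteSpace V]
    (A Ainv B : V →L[ℝ] V)
    (hsym : ∀ v w : V, ⟪A v, w⟫ = ⟪v, A w⟫)
    (hpos : ∀ v : V, v ≠ 0 → 0 < ⟪A v, v⟫)
    (hAinv1 : ∀ v, Ainv (A v) = v) (hAinv2 : ∀ v, A (Ainv v) = v)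
    (δ : ℝ) (hδ0 : 0 ≤ δ) (hδ1 : δ < 1)
    (hcontr : ∀ v : V, anorm A (v - B (A v)) ≤ δ * anorm A v)
    (u u_h r : V) (hr : r = A (u - u_h)) :
    (1 / (1 + δ)) * anorm A (B r) ≤ anorm A (u - u_h) ∧
    anorm A (u - u_h) ≤ (1 / (1 - δ)) * anorm A (B r) := by
  set e := u - u_h with he
  set w := e - B (A e) with hw
  have hBr : B r = e - w := by rw [hr, hw]; abel
  have hcw : anorm A w ≤ δ * anorm A e := hcontr e
  have tri1 : anorm A e ≤ anorm A (B r) + anorm A w := by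
    have heq : e = B r + w := by rw [hBr]; abel
    calc anorm A e = anorm A (B r + w) := by rw [← heq]
      _ ≤ _ := anorm_triangle A hsym hpos _ _
  have hnegw : anorm A (-w) = anorm A w := by
    unfold anorm; rw [map_neg, inner_neg_neg]
  have tri2 : anorm A (B r) ≤ anorm A e + anorm A w := by
    calc anorm A (B r) = anorm A (e + -w) := by rw [hBr, sub_eq_add_neg]
      _ ≤ anorm A e + anorm A (-w) := anorm_triangle A hsym hpos _ _
      _ = anorm A e + anorm A w := by rw [hnegw]
  have h1δ : 0 < 1 + δ := by linarith
  have h1δ' : 0 < 1 - δ := by linarith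
  constructor
  · rw [div_mul_eq_mul_div, div_le_iff₀ h1δ]
    nlinarith
  · rw [div_mul_eq_mul_div, le_div_iff₀ h1δ']
    nlinarith
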